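/- A mixed primitive cyclic string u is a cyclic permutation of a band if and only if u is permutable, i.e., every rotation α_k...α_1α_n...α_{k+1} (1 ≤ k < n) of u = α_n...α_1 is again a string. -/

import Mathlib

/-- A quiver with a set of monomial relations, presenting a string algebra. -/
structure SAQuiver where
  V : Type
  A : Type
  src : A → V
  tgt : A → V
  rel : Set (List A)

namespace SA

variable (S : SAQuiver)

/-- A syllable: a direct arrow (`Sum.inl`) or the formal inverse of an arrow (`Sum.inr`). -/
abbrev Syl := S.A ⊕ S.A

/-- A word of syllables, listed in order of traversal (the head is the first,
i.e. rightmost, syllable in the usual right-to-left notation `αₙ…α₁`). -/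
abbrev Word := List (Syl S)

def sylSrc : Syl S → S.V
  | Sum.inl a => S.src a
  | Sum.inr a => S.tgt a

def sylTgt : Syl S → S.V
  | Sum.inl a => S.tgt a
  | Sum.inr a => S.src a

def sylInv : Syl S → Syl S
  | Sum.inl a => Sum.inr a
  | Sum.inr a => Sum.inl a

/-- Consecutive syllables compose as a walk. -/
def IsWalk : Word S → Prop
  | [] => True
  | [_] => True
  | x :: y :: l => sylTgt S x = sylSrc S y ∧ IsWalk (y :: l)

/-- No two consecutive syllables are inverse to each other. -/
def Reduced : Word S → Prop
  | x :: y :: l => y ≠ sylInv S x ∧ Reduced (y :: l)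
  | _ => True

/-- No subword is a relation or the inverse of a relation. -/
def AvoidsRel (w : Word S) : Prop :=
  ∀ p ∈ S.rel, ¬ ((p.map (Sum.inl : S.A → Syl S)) <:+: w) ∧
    ¬ ((p.map (Sum.inr : S.A → Syl S)).reverse <:+: w)

/-- A (finite, nonempty) string. -/
def IsStr (w : Word S) : Prop :=
  w ≠ [] ∧ IsWalk S w ∧ Reduced S w ∧ AvoidsRel S w

def wSrc : Word S → Option S.V
  | [] => none
  | x :: _ => some (sylSrc S x)

def wTgt (w : Word S) : Option S.V := w.getLast?.map (sylTgt S)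

/-- A cyclic word: its target equals its source. -/
def Cyclic (w : Word S) : Prop := w ≠ [] ∧ wSrc S w = wTgt S w

/-- The `n`-th power of a word under concatenation. -/
def pow (w : Word S) (n : ℕ) : Word S := (List.replicate n w).flatten

/-- A word containing both a direct and an inverse syllable. -/
def Mixed (w : Word S) : Prop := (∃ a, Sum.inl a ∈ w) ∧ (∃ a, Sum.inr a ∈ w)

/-- A word that is not a proper power of a shorter word. -/
def Primitive (w : Word S) : Prop := ¬ ∃ (u : Word S) (k : ℕ), 2 ≤ k ∧ w = pow S u k

/-- A rotation (cyclic permutation) of a word. -/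
def IsRotation (u w : Word S) : Prop := ∃ l₁ l₂ : Word S, w = l₁ ++ l₂ ∧ u = l₂ ++ l₁

/-- A band: a primitive mixed cyclic string, all of whose powers are strings, whose first
syllable is inverse and whose last syllable is direct. -/
def IsBand (w : Word S) : Prop :=
  IsStr S w ∧ Cyclic S w ∧ Primitive S w ∧
    (∃ a, w.head? = some (Sum.inr a)) ∧ (∃ a, w.getLast? = some (Sum.inl a)) ∧
    ∀ n : ℕ, 1 ≤ n → IsStr S (pow S w n)

/-- A cyclic permutation of a band. -/
def RotOfBand (u : Word S) : Prop := ∃ b, IsBand S b ∧ IsRotation S u b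

/-- A prime band: no cyclic permutation of it is a concatenation of two or more cyclic
permutations of bands. -/
def IsPrimeBand (w : Word S) : Prop :=
  IsBand S w ∧
    ¬ ∃ (w' : Word S) (parts : List (Word S)), IsRotation S w' w ∧ 2 ≤ parts.length ∧
        w' = parts.flatten ∧ ∀ p ∈ parts, RotOfBand S p

/-- A word containing no cyclic permutation of a band as a subword. -/
def BandFree (w : Word S) : Prop := ¬ ∃ u, RotOfBand S u ∧ u <:+: w

/-- A word all of whose syllables are direct. -/
def DirectWord (w : Word S) : Prop := ∀ x ∈ w, ∃ a, x = Sum.inl a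

/-- A word all of whose syllables are inverse. -/
def InverseWord (w : Word S) : Prop := ∀ x ∈ w, ∃ a, x = Sum.inr a

/-- A string which is a substring of a cyclic permutation of a band. -/
def Extendable (w : Word S) : Prop := ∃ u, RotOfBand S u ∧ w <:+: u

/-- The axioms for `(Q, ρ)` to present a string algebra. -/
def IsStringAlgebra : Prop :=
  Finite S.V ∧ Finite S.A ∧
  (∀ p ∈ S.rel, p ≠ [] ∧ IsWalk S (p.map (Sum.inl : S.A → Syl S))) ∧
  {p : List S.A | p ≠ [] ∧ IsWalk S (p.map (Sum.inl : S.A → Syl S)) ∧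
      ∀ q ∈ S.rel, ¬ (q <:+: p)}.Finite ∧
  (∀ v : S.V, ¬ ∃ a b c : S.A, a ≠ b ∧ b ≠ c ∧ a ≠ c ∧
      S.src a = v ∧ S.src b = v ∧ S.src c = v) ∧
  (∀ v : S.V, ¬ ∃ a b c : S.A, a ≠ b ∧ b ≠ c ∧ a ≠ c ∧
      S.tgt a = v ∧ S.tgt b = v ∧ S.tgt c = v) ∧
  (∀ b c₁ c₂ : S.A, c₁ ≠ c₂ → IsStr S [Sum.inl b, Sum.inl c₁] →
      ¬ IsStr S [Sum.inl b, Sum.inl c₂]) ∧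
  (∀ b a₁ a₂ : S.A, a₁ ≠ a₂ → IsStr S [Sum.inl a₁, Sum.inl b] →
      ¬ IsStr S [Sum.inl a₂, Sum.inl b])

end SA

namespace SA

variable (S : SAQuiver)

/-! ### Sign functions and hammocks -/

/-- `σ` of a syllable: `σ(a) = σ a`, `σ(B) = ε b`. -/
def sylSg (σ ε : S.A → ℤ) : Syl S → ℤ
  | Sum.inl a => σ a
  | Sum.inr a => ε a

/-- `ε` of a syllable: `ε(a) = ε a`, `ε(B) = σ b`. -/
def sylEp (σ ε : S.A → ℤ) : Syl S → ℤ
  | Sum.inl a => ε a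
  | Sum.inr a => σ a

/-- The conditions on the chosen sign maps `σ, ε : Q₁ → {±1}`. -/
def SignOK (σ ε : S.A → ℤ) : Prop :=
  (∀ a, σ a = 1 ∨ σ a = -1) ∧ (∀ a, ε a = 1 ∨ ε a = -1) ∧
  (∀ a b, a ≠ b → S.src a = S.src b → σ a = -σ b) ∧
  (∀ a b, a ≠ b → S.tgt a = S.tgt b → ε a = -ε b) ∧
  (∀ c b : S.A, IsStr S [Sum.inl c, Sum.inl b] → σ b = -ε c)

/-- Membership in the hammock `H_r(v)`: strings ending at `v` with `ε`-value `1`;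
the empty word stands for the lazy string `1_{(v,1)}`. -/
def HrMem (σ ε : S.A → ℤ) (v : S.V) (w : Word S) : Prop :=
  w = [] ∨ (IsStr S w ∧ wTgt S w = some v ∧
    ∃ s, w.getLast? = some s ∧ sylEp S σ ε s = 1)

/-- The order `<_r` on `H_r(v)`:  `u <_r v` iff `v = u a x`, or `u = v B y`, or
`v = z a x ∧ u = z B y`. -/
def ltr (u v : Word S) : Prop :=
  (∃ (a : S.A) (x : Word S), v = x ++ [Sum.inl a] ++ u) ∨
  (∃ (b : S.A) (y : Word S), u = y ++ [Sum.inr b] ++ v) ∨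
  (∃ (a b : S.A) (x y z : Word S),
      v = x ++ [Sum.inl a] ++ z ∧ u = y ++ [Sum.inr b] ++ z)

/-- The inverse of a word. -/
def wInv (w : Word S) : Word S := (w.map (sylInv S)).reverse

/-- Membership in the hammock `H_l(v)`: strings starting at `v` with `σ`-value `-1`;
the empty word stands for the lazy string `1_{(v,-1)}`'s role in `H_l(v)`. -/
def HlMem (σ ε : S.A → ℤ) (v : S.V) (w : Word S) : Prop :=
  w = [] ∨ (IsStr S w ∧ wSrc S w = some v ∧
    ∃ s, w.head? = some s ∧ sylSg S σ ε s = -1)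

/-- The order `<_l` on `H_l(v)`: `u <_l v` iff `v⁻¹ <_r u⁻¹`. -/
def ltl (u v : Word S) : Prop := ltr S (wInv S v) (wInv S u)

/-- `v` is the direct successor of `u` in the total order `lt` restricted to `P`. -/
def DirSucc (P : Word S → Prop) (lt : Word S → Word S → Prop) (u v : Word S) : Prop :=
  P u ∧ P v ∧ lt u v ∧ ¬ ∃ w, P w ∧ lt u w ∧ lt w v

/-- A finite interval (chain of consecutive elements) in a hammock whose length sequence is
monotone. -/
def MonoChain (P : Word S → Prop) (lt : Word S → Word S → Prop) (n : ℕ)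
    (c : ℕ → Word S) : Prop :=
  (∀ i < n, DirSucc S P lt (c i) (c (i + 1))) ∧
  ((∀ i < n, (c i).length < (c (i + 1)).length) ∨
   (∀ i < n, (c (i + 1)).length < (c i).length))

/-- Torsion-freeness for one hammock: every finite interval with monotone length sequence
extends (on one of its two ends) to a strictly larger such interval. -/
def TFfor (P : Word S → Prop) (lt : Word S → Word S → Prop) : Prop :=
  ∀ (n : ℕ) (c : ℕ → Word S), MonoChain S P lt n c →
    ∃ c' : ℕ → Word S, MonoChain S P lt (n + 1) c' ∧
      ((∀ i ≤ n, c' i = c i) ∨ (∀ i ≤ n, c' (i + 1) = c i))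

/-- A torsion-free string algebra: both the left and right hammock conditions hold at
every vertex. -/
def TorsionFree (σ ε : S.A → ℤ) : Prop :=
  (∀ v : S.V, TFfor S (HrMem S σ ε v) (ltr S)) ∧
  (∀ v : S.V, TFfor S (HlMem S σ ε v) (ltl S))

/-! ### Bridges and the bridge quiver -/

/-- A weak bridge `b₁ → b₂`: a band-free string `u` (possibly of length zero) such that
`b₂ u b₁` is a string. -/
def IsWeakBridge (b₁ u b₂ : Word S) : Prop :=
  IsPrimeBand S b₁ ∧ IsPrimeBand S b₂ ∧ BandFree S u ∧ IsStr S (b₁ ++ u ++ b₂)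

/-- A bridge: a weak bridge which does not factor through another prime band. -/
def IsBridge (b₁ u b₂ : Word S) : Prop :=
  IsWeakBridge S b₁ u b₂ ∧
  ¬ ∃ (bb u₁ u₂ : Word S), IsPrimeBand S bb ∧ IsWeakBridge S b₁ u₁ bb ∧
      IsWeakBridge S bb u₂ b₂ ∧
      ((u = u₁ ++ u₂ ∧ u₁ ≠ [] ∧ u₂ ≠ []) ∨
       (∃ u₁' u₂' u₁'' u₂'' : Word S, u = u₁' ++ u₂' ∧ u₁' ≠ [] ∧ u₂' ≠ [] ∧
          u₁ = u₁' ++ u₁'' ∧ u₂ = u₂'' ++ u₂' ∧ bb = u₁'' ++ u₂''))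

/-- `R` is a set of representatives of the prime bands up to cyclic permutation. -/
def RepSet (R : Set (Word S)) : Prop :=
  (∀ r ∈ R, IsPrimeBand S r) ∧
  ∀ b, IsPrimeBand S b → ∃! r, r ∈ R ∧ IsRotation S b r

/-- One arrow of the bridge quiver with vertex set `R`. -/
def Step (R : Set (Word S)) (x y : Word S) : Prop :=
  x ∈ R ∧ y ∈ R ∧ ∃ u, IsBridge S x u y

/-- Reachability by a directed path in the bridge quiver. -/
def Reach (R : Set (Word S)) : Word S → Word S → Prop :=
  Relation.ReflTransGen (Step S R)

/-- Adjacency (in either direction) in the bridge quiver. -/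
def Adj (R : Set (Word S)) (x y : Word S) : Prop := Step S R x y ∨ Step S R y x

/-- Lying in the same connected component of the bridge quiver. -/
def SameComp (R : Set (Word S)) : Word S → Word S → Prop :=
  Relation.ReflTransGen (Adj S R)

/-- `x` lies on a meta-band, i.e. on a directed cycle of positive length in the bridge
quiver. -/
def OnMetaBand (R : Set (Word S)) (x : Word S) : Prop :=
  (∃ u, IsBridge S x u x ∧ u ≠ []) ∨
  (∃ y, y ≠ x ∧ y ∈ R ∧ Reach S R x y ∧ Reach S R y x)

/-- A meta-`⋃`-cyclic string algebra: each connected component of the bridge quiver has at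
least two vertices and is a union of meta-bands (every vertex and every arrow lies on a
directed cycle of positive length). -/
def MetaUCyclic (R : Set (Word S)) : Prop :=
  (∀ x ∈ R, ∃ y ∈ R, y ≠ x ∧ SameComp S R x y) ∧
  (∀ x ∈ R, OnMetaBand S R x) ∧
  (∀ x y u, x ∈ R → y ∈ R → IsBridge S x u y → Reach S R y x)

/-- A meta-torsion-free string algebra: each connected component of the bridge quiver has
at least two vertices, and every finite directed path of positive length extends to a
`ℤ`-indexed directed path. -/
def MetaTorsionFree (R : Set (Word S)) : Prop :=
  (∀ x ∈ R, ∃ y ∈ R, y ≠ x ∧ SameComp S R x y) ∧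
  (∀ (n : ℕ) (c e : ℕ → Word S), 0 < n → (∀ i ≤ n, c i ∈ R) →
    (∀ i < n, IsBridge S (c i) (e i) (c (i + 1))) →
    ∃ (g d : ℤ → Word S), (∀ i : ℤ, g i ∈ R) ∧
      (∀ i : ℤ, IsBridge S (g i) (d i) (g (i + 1))) ∧
      (∀ i : ℕ, i ≤ n → g (i : ℤ) = c i) ∧ (∀ i : ℕ, i < n → d (i : ℤ) = e i))

/-- A non-domestic string algebra: one with infinitely many bands. -/
def NonDomestic : Prop := ¬ {b : Word S | IsBand S b}.Finite

end SA

section Aux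
namespace SA
variable {S : SAQuiver}

lemma isWalk_iff_chain' : ∀ w : Word S,
    IsWalk S w ↔ List.Chain' (fun x y => sylTgt S x = sylSrc S y) w
  | [] => by simp [IsWalk, List.Chain', List.isChain_nil]
  | [x] => by simp [IsWalk, List.Chain', List.isChain_singleton]
  | x :: y :: l => by
    simp [IsWalk, List.Chain', List.isChain_cons_cons, isWalk_iff_chain' (y :: l)]

lemma reduced_iff_chain' : ∀ w : Word S,
    Reduced S w ↔ List.Chain' (fun x y => y ≠ sylInv S x) w
  | [] => by simp [Reduced, List.Chain', List.isChain_nil]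
  | [x] => by simp [Reduced, List.Chain', List.isChain_singleton]
  | x :: y :: l => by
    simp [Reduced, List.Chain', List.isChain_cons_cons, reduced_iff_chain' (y :: l)]

lemma isRotation_iff {a b : Word S} : IsRotation S a b ↔ b ~r a := by
  constructor
  · rintro ⟨l₁, l₂, rfl, rfl⟩; exact List.isRotated_append
  · intro h
    obtain ⟨n, hn, rfl⟩ := List.isRotated_iff_mod.1 h
    exact ⟨b.take n, b.drop n, (List.take_append_drop n b).symm,
      List.rotate_eq_drop_append_take hn⟩

lemma infix_append_split {α : Type*} {v l₁ l₂ : List α} (h : v <:+: l₁ ++ l₂) :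
    v <:+: l₁ ∨ v <:+: l₂ ∨
      ∃ v₁ v₂, v = v₁ ++ v₂ ∧ v₁ ≠ [] ∧ v₂ ≠ [] ∧ v₁ <:+ l₁ ∧ v₂ <+: l₂ := by
  obtain ⟨s, t, hst⟩ := h
  rw [List.append_assoc] at hst
  rcases List.append_eq_append_iff.1 hst with ⟨a, ha1, ha2⟩ | ⟨c, _, hc2⟩
  · rcases List.append_eq_append_iff.1 ha2 with ⟨d, hd1, _⟩ | ⟨e, he1, he2⟩
    · refine Or.inl ⟨s, d, ?_⟩
      rw [ha1, hd1, List.append_assoc]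
    · rcases eq_or_ne a [] with rfl | hane
      · refine Or.inr (Or.inl ⟨[], t, ?_⟩)
        rw [List.nil_append] at he1
        rw [he2, he1]
        rfl
      rcases eq_or_ne e [] with rfl | hene
      · refine Or.inl ⟨s, [], ?_⟩
        simp [ha1, he1]
      · exact Or.inr (Or.inr ⟨a, e, he1, hane, hene,
          ⟨s, ha1.symm⟩, ⟨t, he2.symm⟩⟩)
  · refine Or.inr (Or.inl ⟨c, t, ?_⟩)
    rw [hc2, List.append_assoc]

lemma pow_zero (w : Word S) : pow S w 0 = [] := rfl

lemma pow_succ' (w : Word S) (n : ℕ) : pow S w (n + 1) = w ++ pow S w n := by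
  simp [pow, List.replicate_succ]

lemma pow_nil : ∀ n : ℕ, pow S [] n = []
  | 0 => rfl
  | (n + 1) => by rw [pow_succ', pow_nil n]; rfl

lemma pow_succ (w : Word S) (n : ℕ) : pow S w (n + 1) = pow S w n ++ w := by
  induction n with
  | zero => simp [pow_succ', pow_zero]
  | succ n ih =>
    rw [pow_succ' w (n + 1), ih, ← List.append_assoc, ← pow_succ', ih]

lemma head?_pow {w : Word S} (hw : w ≠ []) {n : ℕ} (hn : 1 ≤ n) :
    (pow S w n).head? = w.head? := by
  obtain ⟨m, rfl⟩ : ∃ m, n = m + 1 := ⟨n - 1, by omega⟩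
  rw [pow_succ', List.head?_append_of_ne_nil _ hw]

lemma chain'_pow {R : Syl S → Syl S → Prop} {w : Word S}
    (h1 : List.Chain' R w) (h2 : ∀ x ∈ w.getLast?, ∀ y ∈ w.head?, R x y) :
    ∀ n : ℕ, List.Chain' R (pow S w n)
  | 0 => by rw [pow_zero]; exact List.isChain_nil
  | (n + 1) => by
    rw [pow_succ']
    refine List.IsChain.append h1 (chain'_pow h1 h2 n) ?_
    intro x hx y hy
    apply h2 x hx
    rcases n with _ | m
    · rw [pow_zero] at hy; simp at hy
    · rcases eq_or_ne w [] with rfl | hwne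
      · rw [pow_nil] at hy; simp at hy
      · rwa [head?_pow hwne (by omega)] at hy

lemma direct_infix_pow {b : Word S} (hb : b ≠ []) {a0 : S.A}
    (hh : b.head? = some (Sum.inr a0)) :
    ∀ (n : ℕ) {v : Word S}, (∀ x ∈ v, ∃ a, x = Sum.inl a) → v <:+: pow S b n → v <:+: b
  | 0, v, _, hinf => by
    rw [pow_zero] at hinf
    rw [List.eq_nil_of_infix_nil hinf]
    exact List.nil_infix
  | (n + 1), v, hv, hinf => by
    rw [pow_succ'] at hinf
    rcases infix_append_split hinf with h | h | ⟨v₁, v₂, rfl, _, h2, _, h4⟩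
    · exact h
    · exact direct_infix_pow hb hh n (fun x hx => hv x (by simp [hx])) h
    · exfalso
      rcases n with _ | m
      · rw [pow_zero] at h4
        exact h2 (List.prefix_nil.1 h4)
      · obtain ⟨y, v₂', rfl⟩ := List.exists_cons_of_ne_nil h2
        have hhead : (pow S b (m + 1)).head? = some y := by
          obtain ⟨r, hr⟩ := h4
          rw [← hr]; rfl
        rw [head?_pow hb (by omega), hh] at hhead
        obtain ⟨a, ha⟩ := hv y (by simp)
        rw [ha] at hhead
        simp at hhead

lemma inverse_infix_pow {b : Word S} {c0 : S.A}
    (hl : b.getLast? = some (Sum.inl c0)) :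
    ∀ (n : ℕ) {v : Word S}, (∀ x ∈ v, ∃ a, x = Sum.inr a) → v <:+: pow S b n → v <:+: b
  | 0, v, _, hinf => by
    rw [pow_zero] at hinf
    rw [List.eq_nil_of_infix_nil hinf]
    exact List.nil_infix
  | (n + 1), v, hv, hinf => by
    rw [pow_succ'] at hinf
    rcases infix_append_split hinf with h | h | ⟨v₁, v₂, rfl, h1, _, h3, _⟩
    · exact h
    · exact inverse_infix_pow hl n (fun x hx => hv x (by simp [hx])) h
    · exfalso
      obtain ⟨s, hs⟩ := h3
      have hlast : v₁.getLast? = some (Sum.inl c0) := by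
        rw [← hl, ← hs, List.getLast?_append_of_ne_nil _ h1]
      have hmem : (Sum.inl c0 : Syl S) ∈ v₁ := List.mem_of_mem_getLast? hlast
      obtain ⟨a, ha⟩ := hv (Sum.inl c0) (by simp [hmem])
      simp at ha

lemma isStr_infix {w v : Word S} (hw : IsStr S w) (hv : v <:+: w) (hne : v ≠ []) :
    IsStr S v := by
  obtain ⟨-, hwalk, hred, havoid⟩ := hw
  refine ⟨hne, ?_, ?_, ?_⟩
  · exact (isWalk_iff_chain' v).2 (((isWalk_iff_chain' w).1 hwalk).infix hv)
  · exact (reduced_iff_chain' v).2 (((reduced_iff_chain' w).1 hred).infix hv)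
  · intro p hp
    obtain ⟨h1, h2⟩ := havoid p hp
    exact ⟨fun h => h1 (h.trans hv), fun h => h2 (h.trans hv)⟩

lemma pow_rotate (d t : Word S) : ∀ m : ℕ,
    d ++ pow S (t ++ d) m ++ t = pow S (d ++ t) (m + 1)
  | 0 => by simp [pow_zero, pow_succ']
  | (m + 1) => by
    rw [pow_succ' (t ++ d) m, pow_succ' (d ++ t) (m + 1), ← pow_rotate d t m]
    simp [List.append_assoc]

lemma rot_of_pow : ∀ (N : ℕ) (l₁ l₂ v : Word S) (k : ℕ), l₁.length ≤ N →
    l₁ ++ l₂ = pow S v k → ∃ w : Word S, w.length = v.length ∧ l₂ ++ l₁ = pow S w k := by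
  intro N
  induction N with
  | zero =>
    intro l₁ l₂ v k h1 h2
    have hl : l₁ = [] := List.eq_nil_of_length_eq_zero (Nat.le_zero.1 h1)
    subst hl
    exact ⟨v, rfl, by simpa using h2⟩
  | succ N ih =>
    intro l₁ l₂ v k h1 h2
    rcases k with _ | m
    · rw [pow_zero] at h2
      rcases List.append_eq_nil_iff.1 h2 with ⟨rfl, rfl⟩
      exact ⟨v, rfl, rfl⟩
    rcases eq_or_ne v [] with rfl | hv
    · rw [pow_nil] at h2
      rcases List.append_eq_nil_iff.1 h2 with ⟨rfl, rfl⟩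
      exact ⟨[], rfl, (pow_nil _).symm⟩
    rcases le_or_gt l₁.length v.length with hle | hlt
    · have hl₁ : l₁ = v.take l₁.length := by
        have h := congrArg (List.take l₁.length) h2
        rw [List.take_left, pow_succ', List.take_append_of_le_length hle] at h
        exact h
      have hl₂ : l₂ = v.drop l₁.length ++ pow S v m := by
        have h := congrArg (List.drop l₁.length) h2
        rw [List.drop_left, pow_succ', List.drop_append_of_le_length hle] at h
        exact h
      obtain ⟨t0, ht0⟩ : ∃ t0, t0 = v.take l₁.length := ⟨_, rfl⟩
      obtain ⟨d0, hd0⟩ : ∃ d0, d0 = v.drop l₁.length := ⟨_, rfl⟩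
      rw [← ht0] at hl₁
      rw [← hd0] at hl₂
      have hv' : v = t0 ++ d0 := by rw [ht0, hd0, List.take_append_drop]
      refine ⟨d0 ++ t0, ?_, ?_⟩
      · rw [List.length_append]
        conv_rhs => rw [hv']
        rw [List.length_append]
        omega
      · rw [hl₁, hl₂, hv']
        exact pow_rotate _ _ m
    · have hvpos : 0 < v.length := List.length_pos_iff.2 hv
      have hl₁v : l₁.take v.length = v := by
        have h := congrArg (List.take v.length) h2
        rw [List.take_append_of_le_length hlt.le, pow_succ', List.take_left] at h
        exact h
      have hsplit : l₁ = v ++ l₁.drop v.length := by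
        conv_lhs => rw [← List.take_append_drop v.length l₁, hl₁v]
      have hlen : (l₁.drop v.length).length ≤ N := by
        rw [List.length_drop]; omega
      have heq : l₁.drop v.length ++ (l₂ ++ v) = pow S v (m + 1) := by
        have hpm : l₁.drop v.length ++ l₂ = pow S v m := by
          apply List.append_cancel_left (as := v)
          rw [← List.append_assoc, ← hsplit, h2, pow_succ']
        rw [pow_succ, ← hpm, List.append_assoc]
      obtain ⟨w, hwlen, hw⟩ := ih (l₁.drop v.length) (l₂ ++ v) v (m + 1) hlen heq
      refine ⟨w, hwlen, ?_⟩
      rw [hsplit, ← hw]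
      simp [List.append_assoc]

lemma mixed_rotation {u : Word S} (hm : Mixed S u) :
    ∃ b : Word S, b ~r u ∧ (∃ a, b.head? = some (Sum.inr a)) ∧
      (∃ c, b.getLast? = some (Sum.inl c)) := by
  obtain ⟨⟨a0, ha0⟩, ⟨a1, ha1⟩⟩ := hm
  set r := u.reverse.takeWhile (fun x => x.isRight) with hrdef
  set m' := u.reverse.dropWhile (fun x => x.isRight) with hmdef
  have hur : u.reverse = r ++ m' := (List.takeWhile_append_dropWhile).symm
  have hm'ne : m' ≠ [] := by
    intro h
    rw [h, List.append_nil] at hur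
    have hmem : (Sum.inl a0 : Syl S) ∈ r := by rw [← hur]; simpa using ha0
    have := List.mem_takeWhile_imp hmem
    simp at this
  have hm'head : ∃ c, m'.head? = some (Sum.inl c) := by
    obtain ⟨y, m'', hy⟩ := List.exists_cons_of_ne_nil hm'ne
    have hdw := List.head_dropWhile_not (fun x : Syl S => x.isRight) hm'ne
    simp only [← hmdef, hy, List.head_cons] at hdw
    cases y with
    | inl c => exact ⟨c, by rw [hy]; rfl⟩
    | inr c => simp at hdw
  obtain ⟨c0, hc0⟩ := hm'head
  have hu : u = m'.reverse ++ r.reverse := by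
    rw [← List.reverse_append, ← hur, List.reverse_reverse]
  have hcu : r.reverse ++ m'.reverse ~r u := by
    rw [hu]; exact List.isRotated_append
  have hclast : (r.reverse ++ m'.reverse).getLast? = some (Sum.inl c0) := by
    rw [List.getLast?_append_of_ne_nil _ (by simpa using hm'ne),
      List.getLast?_reverse, hc0]
  set c := r.reverse ++ m'.reverse with hcdef
  set t := c.takeWhile (fun x => !x.isRight) with htdef
  set d := c.dropWhile (fun x => !x.isRight) with hddef
  have hc2 : c = t ++ d := (List.takeWhile_append_dropWhile).symm
  have hdne : d ≠ [] := by
    intro h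
    have hmem : (Sum.inr a1 : Syl S) ∈ c := (hcu.mem_iff).2 ha1
    rw [hc2, h, List.append_nil] at hmem
    have := List.mem_takeWhile_imp hmem
    simp at this
  have hdhead : ∃ a, d.head? = some (Sum.inr a) := by
    obtain ⟨y, d', hy⟩ := List.exists_cons_of_ne_nil hdne
    have hdw := List.head_dropWhile_not (fun x : Syl S => !x.isRight) hdne
    simp only [← hddef, hy, List.head_cons] at hdw
    cases y with
    | inl a => simp at hdw
    | inr a => exact ⟨a, by rw [hy]; rfl⟩
  refine ⟨d ++ t, ?_, ?_, ?_⟩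
  · have h1 : d ++ t ~r t ++ d := List.isRotated_append
    rw [← hc2] at h1
    exact h1.trans hcu
  · obtain ⟨a, ha⟩ := hdhead
    exact ⟨a, by rw [List.head?_append_of_ne_nil _ hdne, ha]⟩
  · rcases eq_or_ne t [] with ht | htne
    · refine ⟨c0, ?_⟩
      rw [ht, List.append_nil]
      rw [ht, List.nil_append] at hc2
      rw [← hc2]
      exact hclast
    · set z := t.getLast htne with hzdef
      have hzmem : z ∈ t := List.getLast_mem htne
      have hzp := List.mem_takeWhile_imp hzmem
      cases hz : z with
      | inl a =>
        refine ⟨a, ?_⟩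
        rw [List.getLast?_append_of_ne_nil _ htne, List.getLast?_eq_getLast htne,
          ← hzdef, hz]
      | inr a => rw [hz] at hzp; simp at hzp

lemma cyclic_rot {u b : Word S} (hcyc : Cyclic S u) (hwalk : IsWalk S u)
    (h : IsRotation S b u) : Cyclic S b := by
  obtain ⟨l₁, l₂, rfl, rfl⟩ := h
  rcases eq_or_ne l₁ [] with rfl | h1
  · simpa using hcyc
  rcases eq_or_ne l₂ [] with rfl | h2
  · simpa using hcyc
  refine ⟨by simp [h2], ?_⟩
  obtain ⟨y, l₂', rfl⟩ := List.exists_cons_of_ne_nil h2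
  obtain ⟨g, hg⟩ : ∃ g, l₁.getLast? = some g := by
    cases hgl : l₁.getLast? with
    | none => exact absurd (List.getLast?_eq_none_iff.1 hgl) h1
    | some g => exact ⟨g, rfl⟩
  have hjun : sylTgt S g = sylSrc S y := by
    have hch := (isWalk_iff_chain' _).1 hwalk
    exact (List.isChain_append.1 hch).2.2 g hg y rfl
  show wSrc S ((y :: l₂') ++ l₁) = wTgt S ((y :: l₂') ++ l₁)
  rw [show ((y :: l₂') ++ l₁) = y :: (l₂' ++ l₁) from rfl]
  unfold wSrc wTgt
  rw [show (y :: (l₂' ++ l₁)).getLast? = l₁.getLast? from by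
    rw [show (y :: (l₂' ++ l₁)) = (y :: l₂') ++ l₁ from rfl,
      List.getLast?_append_of_ne_nil _ h1], hg]
  simp [hjun]

end SA
end Aux


open SA in
/-- A mixed primitive cyclic string `u` is a cyclic permutation of a band if and only if it
is permutable, i.e. every rotation of `u` is again a string. -/
theorem rot_of_band_iff_permutable (S : SAQuiver) (hSA : SA.IsStringAlgebra S)
    (u : Word S) (hu : IsStr S u) (hc : Cyclic S u) (hm : Mixed S u)
    (hp : Primitive S u) :
    RotOfBand S u ↔ ∀ w : Word S, IsRotation S w u → IsStr S w := by
  constructor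
  · -- forward: every rotation of a rotation of a band is a substring of the square
    rintro ⟨b, hband, hrot⟩ w hw
    have hbu : b ~r u := isRotation_iff.1 hrot
    have huw : u ~r w := isRotation_iff.1 hw
    obtain ⟨m₁, m₂, hb, hw'⟩ := isRotation_iff.2 (hbu.trans huw)
    have hwne : w ≠ [] := by
      intro h
      apply hu.1
      have hlen : u.length = w.length := huw.perm.length_eq
      rw [h] at hlen
      exact List.length_eq_zero_iff.1 hlen
    have hinf : w <:+: pow S b 2 := by
      have hpow2 : pow S b 2 = b ++ b := by simp [pow, List.replicate_succ]
      rw [hpow2, hb, hw']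
      exact ⟨m₁, m₂, by simp only [List.append_assoc]⟩
    exact isStr_infix (hband.2.2.2.2.2 2 (by norm_num)) hinf hwne
  · -- backward: construct the band
    intro hperm
    obtain ⟨b, hbu, ⟨a0, hh⟩, ⟨c0, hl⟩⟩ := mixed_rotation hm
    have hrotbu : IsRotation S b u := isRotation_iff.2 hbu.symm
    have hstrb : IsStr S b := hperm b hrotbu
    have hbne : b ≠ [] := hstrb.1
    obtain ⟨x, r, rfl⟩ := List.exists_cons_of_ne_nil hbne
    have hxval : x = Sum.inr a0 := by
      have : (x :: r).head? = some x := rfl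
      rw [hh] at this
      exact (Option.some.inj this).symm
    have hrne : r ≠ [] := by
      rintro rfl
      rw [show ([x] : Word S).getLast? = some x from rfl, hxval] at hl
      simp at hl
    have hlastr : r.getLast? = some (Sum.inl c0) := by
      rw [← hl, show (x :: r : Word S) = [x] ++ r from rfl,
        List.getLast?_append_of_ne_nil _ hrne]
    -- the rotation by one is a string, giving the reduced boundary
    have hrotb' : IsRotation S (r ++ [x]) u :=
      isRotation_iff.2 (hbu.symm.trans (List.isRotated_concat x r).symm)
    have hstrb' : IsStr S (r ++ [x]) := hperm _ hrotb'
    have hbdryred : ∀ p ∈ (x :: r : Word S).getLast?, ∀ q ∈ (x :: r : Word S).head?,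
        q ≠ sylInv S p := by
      intro p hp q hq
      have hch := (reduced_iff_chain' _).1 hstrb'.2.2.1
      have hj := (List.isChain_append.1 hch).2.2
      rw [show (x :: r : Word S) = [x] ++ r from rfl,
        List.getLast?_append_of_ne_nil _ hrne] at hp
      have hq' : q = x := (by simpa using hq : x = q).symm
      rw [hq']
      exact hj p hp x rfl
    -- cyclicity of b
    have hcycb : Cyclic S (x :: r) := cyclic_rot hc hu.2.1 hrotbu
    have hbdrywalk : ∀ p ∈ (x :: r : Word S).getLast?, ∀ q ∈ (x :: r : Word S).head?,
        sylTgt S p = sylSrc S q := by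
      intro p hp q hq
      have hq' : q = x := (by simpa using hq : x = q).symm
      have h2 := hcycb.2
      unfold wSrc wTgt at h2
      rw [hp] at h2
      have := Option.some.inj h2
      rw [hq', ← this]
    -- all powers are strings
    have hpowstr : ∀ n : ℕ, 1 ≤ n → IsStr S (pow S (x :: r) n) := by
      intro n hn
      obtain ⟨m, rfl⟩ : ∃ m, n = m + 1 := ⟨n - 1, by omega⟩
      refine ⟨?_, ?_, ?_, ?_⟩
      · rw [SA.pow_succ']
        simp
      · exact (isWalk_iff_chain' _).2
          (chain'_pow ((isWalk_iff_chain' _).1 hstrb.2.1) hbdrywalk (m + 1))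
      · exact (reduced_iff_chain' _).2
          (chain'_pow ((reduced_iff_chain' _).1 hstrb.2.2.1) hbdryred (m + 1))
      · intro p hp
        obtain ⟨h1, h2⟩ := hstrb.2.2.2 p hp
        constructor
        · intro hcon
          exact h1 (direct_infix_pow hbne hh (m + 1)
            (fun y hy => by
              obtain ⟨a, -, rfl⟩ := List.mem_map.1 hy
              exact ⟨a, rfl⟩) hcon)
        · intro hcon
          exact h2 (inverse_infix_pow hl (m + 1)
            (fun y hy => by
              rw [List.mem_reverse] at hy
              obtain ⟨a, -, rfl⟩ := List.mem_map.1 hy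
              exact ⟨a, rfl⟩) hcon)
    -- primitivity of b
    have hprimb : Primitive S (x :: r) := by
      rintro ⟨v, k, hk, hbv⟩
      obtain ⟨l₁, l₂, hbeq, hueq⟩ := isRotation_iff.2 hbu
      obtain ⟨w, -, hw⟩ := rot_of_pow l₁.length l₁ l₂ v k le_rfl
        (by rw [← hbeq, hbv])
      exact hp ⟨w, k, hk, by rw [hueq, hw]⟩
    exact ⟨x :: r, ⟨hstrb, hcycb, hprimb, ⟨a0, hh⟩, ⟨c0, hl⟩, hpowstr⟩, isRotation_iff.2 hbu⟩
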